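/- Compatible function approximation introduces no bias in the soft policy gradient: let S × A be finite, let ρ : S × A → ℝ with ρ(s,a) > 0 and Σ ρ = 1, let ψ : S × A → ℝ^d (the score features ∇_θ log π(a|s)), let Q : S × A → ℝ be arbitrary (the true soft Q-function), and for ω ∈ ℝ^d define the compatible approximator Q^ω(s,a) = ⟨ω, ψ(s,a)⟩. If ω* minimizes the mean-squared error ε²(ω) = Σ_{(s,a)} ρ(s,a) (Q^ω(s,a) − Q(s,a))² over ℝ^d, then Σ_{(s,a)} ρ(s,a) (Q^{ω*}(s,a) − Q(s,a)) ψ(s,a) = 0, and hence for any function b : S × A → ℝ (e.g. b(s,a) = log π(a|s) + 1), Σ_{(s,a)} ρ(s,a) (Q^{ω*}(s,a) − b(s,a)) ψ(s,a) = Σ_{(s,a)} ρ(s,a) (Q(s,a) − b(s,a)) ψ(s,a); that is, the soft policy gradient computed with Q^{ω*} equals the soft policy gradient computed with the true Q. -/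

import Mathlib

/-- **Compatible function approximation introduces no bias.** Let `S × A` be finite, `ρ` a
strictly positive probability distribution on `S × A`, `ψ : S × A → ℝ^d` the score features,
`Q : S × A → ℝ` arbitrary, and `Q^ω(s,a) = ⟨ω, ψ(s,a)⟩` the compatible approximator. If `ω*`
globally minimizes the mean-squared error `ε²(ω) = Σ ρ(s,a)(Q^ω(s,a) − Q(s,a))²`, then
`Σ ρ(s,a)(Q^{ω*}(s,a) − Q(s,a)) ψ(s,a) = 0`, and hence for any baseline `b : S × A → ℝ`,
`Σ ρ(s,a)(Q^{ω*}(s,a) − b(s,a)) ψ(s,a) = Σ ρ(s,a)(Q(s,a) − b(s,a)) ψ(s,a)`. -/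
theorem compatible_function_approximation_unbiased
    {S A : Type*} [Fintype S] [Fintype A] (d : ℕ)
    (ρ : S × A → ℝ) (hρ_pos : ∀ sa, 0 < ρ sa) (hρ_sum : ∑ sa : S × A, ρ sa = 1)
    (ψ : S × A → Fin d → ℝ)
    (Q : S × A → ℝ)
    (Qω : (Fin d → ℝ) → S × A → ℝ)
    (hQω : ∀ ω sa, Qω ω sa = ∑ i, ω i * ψ sa i)
    (ε2 : (Fin d → ℝ) → ℝ)
    (hε2 : ∀ ω, ε2 ω = ∑ sa : S × A, ρ sa * (Qω ω sa - Q sa) ^ 2)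
    (ωstar : Fin d → ℝ)
    (hmin : ∀ ω : Fin d → ℝ, ε2 ωstar ≤ ε2 ω) :
    (∑ sa : S × A, (ρ sa * (Qω ωstar sa - Q sa)) • ψ sa) = 0 ∧
    ∀ b : S × A → ℝ,
      (∑ sa : S × A, (ρ sa * (Qω ωstar sa - b sa)) • ψ sa) =
        ∑ sa : S × A, (ρ sa * (Q sa - b sa)) • ψ sa := by
  have key : ∀ i : Fin d, ∑ sa : S × A, ρ sa * (Qω ωstar sa - Q sa) * ψ sa i = 0 := by
    intro i
    set c := ∑ sa : S × A, ρ sa * (Qω ωstar sa - Q sa) * ψ sa i with hc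
    set a := ∑ sa : S × A, ρ sa * ψ sa i ^ 2 with ha
    have ha0 : 0 ≤ a :=
      Finset.sum_nonneg fun sa _ => mul_nonneg (hρ_pos sa).le (sq_nonneg _)
    have hexp : ∀ t : ℝ,
        ε2 (ωstar + t • (Pi.single i 1 : Fin d → ℝ)) = ε2 ωstar + 2 * t * c + t ^ 2 * a := by
      intro t
      have hQ' : ∀ sa, Qω (ωstar + t • (Pi.single i 1 : Fin d → ℝ)) sa = Qω ωstar sa + t * ψ sa i := by
        intro sa
        rw [hQω, hQω]
        have h1 : ∀ j : Fin d, (ωstar + t • (Pi.single i 1 : Fin d → ℝ)) j * ψ sa j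
            = ωstar j * ψ sa j + t * ((Pi.single i 1 : Fin d → ℝ) j * ψ sa j) := by
          intro j; simp [Pi.single_apply, mul_ite]; split <;> ring
        rw [Finset.sum_congr rfl fun j _ => h1 j, Finset.sum_add_distrib, ← Finset.mul_sum]
        congr 2
        simp [Pi.single_apply]
      rw [hε2, hε2]
      have h2 : ∀ sa : S × A, ρ sa * (Qω (ωstar + t • (Pi.single i 1 : Fin d → ℝ)) sa - Q sa) ^ 2
          = ρ sa * (Qω ωstar sa - Q sa) ^ 2
            + 2 * t * (ρ sa * (Qω ωstar sa - Q sa) * ψ sa i)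
            + t ^ 2 * (ρ sa * ψ sa i ^ 2) := by
        intro sa; rw [hQ' sa]; ring
      rw [Finset.sum_congr rfl fun sa _ => h2 sa, Finset.sum_add_distrib,
        Finset.sum_add_distrib, ← Finset.mul_sum, ← Finset.mul_sum]
    have hineq : ∀ t : ℝ, 0 ≤ 2 * t * c + t ^ 2 * a := by
      intro t
      have := hmin (ωstar + t • (Pi.single i 1 : Fin d → ℝ))
      rw [hexp t] at this
      linarith
    have hpos : (0:ℝ) < a + 1 := by linarith
    set u : ℝ := -c / (a + 1) with hu
    have hu' : u * (a + 1) = -c := by rw [hu]; exact div_mul_cancel₀ _ hpos.ne'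
    have ht := hineq u
    have hc2 : c ^ 2 ≤ 0 := by nlinarith [sq_nonneg u, sq_nonneg c, mul_self_nonneg u]
    nlinarith [sq_nonneg c]
  have part1 : (∑ sa : S × A, (ρ sa * (Qω ωstar sa - Q sa)) • ψ sa) = 0 := by
    funext i
    rw [Finset.sum_apply]
    simp only [Pi.smul_apply, smul_eq_mul, Pi.zero_apply]
    exact key i
  refine ⟨part1, fun b => ?_⟩
  have hsub : (∑ sa : S × A, (ρ sa * (Qω ωstar sa - b sa)) • ψ sa)
      - ∑ sa : S × A, (ρ sa * (Q sa - b sa)) • ψ sa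
      = ∑ sa : S × A, (ρ sa * (Qω ωstar sa - Q sa)) • ψ sa := by
    rw [← Finset.sum_sub_distrib]
    refine Finset.sum_congr rfl fun sa _ => ?_
    rw [← sub_smul]; congr 1; ring
  exact sub_eq_zero.mp (hsub.trans part1)
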